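/- There exists a constant C > 0 such that for every real P ≥ 1: Σ_{j=0}^∞ [ (1 + (P + j)²)^{−1} · (1 + j^{1/2})^{−1} ] ≤ C P^{−3/2}. -/

import Mathlib

private lemma sqrt_inv_sum_le (n : ℕ) :
    ∑ j ∈ Finset.range n, (1 + Real.sqrt j)⁻¹ ≤ 2 * Real.sqrt n := by
  induction n with
  | zero => simp
  | succ n ih =>
    rw [Finset.sum_range_succ]
    have h0 : (0:ℝ) ≤ Real.sqrt n := Real.sqrt_nonneg _
    have hmono : Real.sqrt n ≤ Real.sqrt ((n:ℝ)+1) := by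
      apply Real.sqrt_le_sqrt; linarith
    have h2 : Real.sqrt ((n:ℝ)+1) ≤ Real.sqrt n + 1 := by
      have hsq : ((n:ℝ)+1) ≤ (Real.sqrt n + 1)^2 := by
        nlinarith [Real.sq_sqrt (show (0:ℝ) ≤ n by positivity)]
      calc Real.sqrt ((n:ℝ)+1) ≤ Real.sqrt ((Real.sqrt n + 1)^2) := Real.sqrt_le_sqrt hsq
        _ = Real.sqrt n + 1 := Real.sqrt_sq (by linarith)
    have hprod : (Real.sqrt ((n:ℝ)+1) - Real.sqrt n) * (Real.sqrt ((n:ℝ)+1) + Real.sqrt n) = 1 := by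
      have a := Real.sq_sqrt (show (0:ℝ) ≤ (n:ℝ)+1 by positivity)
      have b := Real.sq_sqrt (show (0:ℝ) ≤ (n:ℝ) by positivity)
      nlinarith
    have hpos : (0:ℝ) < 1 + Real.sqrt n := by positivity
    have hkey : (1 + Real.sqrt n)⁻¹ ≤ 2 * (Real.sqrt ((n:ℝ)+1) - Real.sqrt n) := by
      rw [inv_eq_one_div, div_le_iff₀ hpos]
      nlinarith
    have : Real.sqrt ((n+1:ℕ):ℝ) = Real.sqrt ((n:ℝ)+1) := by push_cast; ring_nf
    rw [this]
    linarith

theorem stmt_18 :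
    ∃ C : ℝ, 0 < C ∧ ∀ P : ℝ, 1 ≤ P →
      Summable (fun j : ℕ => (1 + (P + (j : ℝ)) ^ 2)⁻¹ * (1 + (j : ℝ) ^ ((1:ℝ)/2))⁻¹) ∧
      ∑' j : ℕ, (1 + (P + (j : ℝ)) ^ 2)⁻¹ * (1 + (j : ℝ) ^ ((1:ℝ)/2))⁻¹ ≤
        C * P ^ (-(3:ℝ)/2) := by
  refine ⟨4, by norm_num, fun P hP => ?_⟩
  have hP0 : (0:ℝ) < P := by linarith
  set f : ℕ → ℝ := fun j => (1 + (P + (j : ℝ)) ^ 2)⁻¹ * (1 + Real.sqrt j)⁻¹ with hf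
  have hfun : (fun j : ℕ => (1 + (P + (j : ℝ)) ^ 2)⁻¹ * (1 + (j : ℝ) ^ ((1:ℝ)/2))⁻¹) = f := by
    funext j
    simp only [hf, Real.sqrt_eq_rpow]
  have hf_nonneg : ∀ j : ℕ, 0 ≤ f j := fun j => by
    have := Real.sqrt_nonneg (j:ℝ); positivity
  -- summability
  have hsum2 : Summable (fun n : ℕ => 1/((n:ℝ)+1)^2) := by
    have h2 : Summable (fun n : ℕ => 1/((n:ℝ))^2) :=
      Real.summable_one_div_nat_pow.mpr one_lt_two
    have := (summable_nat_add_iff 1).mpr h2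
    simpa using this
  have hsum1 : Summable (fun n : ℕ => (1+(n:ℝ)^2)⁻¹) := by
    apply Summable.of_nonneg_of_le (fun n => by positivity) (fun n => ?_) (hsum2.mul_left 2)
    have hA : (0:ℝ) < 1+(n:ℝ)^2 := by positivity
    have hB : (0:ℝ) < ((n:ℝ)+1)^2 := by positivity
    rw [mul_one_div, inv_eq_one_div, div_le_div_iff₀ hA hB]
    nlinarith [sq_nonneg ((n:ℝ) - 1)]
  have hfle : ∀ j : ℕ, f j ≤ (1+(j:ℝ)^2)⁻¹ := by
    intro j
    have hs := Real.sqrt_nonneg (j:ℝ)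
    have h1 : (1 + (P + (j:ℝ))^2)⁻¹ ≤ (1+(j:ℝ)^2)⁻¹ := by
      apply inv_anti₀ (by positivity)
      nlinarith [Nat.cast_nonneg (α := ℝ) j]
    have h2 : (1 + Real.sqrt j)⁻¹ ≤ 1 := by
      rw [inv_le_one_iff₀]; right; linarith
    calc f j ≤ (1 + (P + (j:ℝ))^2)⁻¹ * 1 := by
          apply mul_le_mul_of_nonneg_left h2 (by positivity)
      _ = (1 + (P + (j:ℝ))^2)⁻¹ := mul_one _
      _ ≤ (1+(j:ℝ)^2)⁻¹ := h1
  have hsumf : Summable f := Summable.of_nonneg_of_le hf_nonneg hfle hsum1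
  rw [hfun]
  refine ⟨hsumf, ?_⟩
  -- constants
  set N : ℕ := ⌈P⌉₊ with hN
  have hNP : P ≤ (N:ℝ) := Nat.le_ceil P
  have hNP1 : (N:ℝ) ≤ P + 1 := le_of_lt (Nat.ceil_lt_add_one hP0.le)
  have hN1 : 1 ≤ N := by
    rw [hN]; exact Nat.one_le_ceil_iff.mpr hP0
  -- head bound
  have head : ∑ j ∈ Finset.range N, f j ≤ 2 * Real.sqrt 2 * ((P^2)⁻¹ * Real.sqrt P) := by
    have step : ∀ j ∈ Finset.range N, f j ≤ (P^2)⁻¹ * (1 + Real.sqrt j)⁻¹ := by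
      intro j _
      apply mul_le_mul_of_nonneg_right _ (by positivity)
      apply inv_anti₀ (by positivity)
      nlinarith [Nat.cast_nonneg (α := ℝ) j]
    calc ∑ j ∈ Finset.range N, f j
        ≤ ∑ j ∈ Finset.range N, (P^2)⁻¹ * (1 + Real.sqrt j)⁻¹ := Finset.sum_le_sum step
      _ = (P^2)⁻¹ * ∑ j ∈ Finset.range N, (1 + Real.sqrt j)⁻¹ := by rw [Finset.mul_sum]
      _ ≤ (P^2)⁻¹ * (2 * Real.sqrt N) := by
          apply mul_le_mul_of_nonneg_left (sqrt_inv_sum_le N) (by positivity)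
      _ ≤ (P^2)⁻¹ * (2 * (Real.sqrt 2 * Real.sqrt P)) := by
          apply mul_le_mul_of_nonneg_left _ (by positivity)
          have : Real.sqrt N ≤ Real.sqrt (2*P) := by
            apply Real.sqrt_le_sqrt; linarith
          rw [Real.sqrt_mul (by norm_num : (0:ℝ) ≤ 2)] at this
          linarith
      _ = 2 * Real.sqrt 2 * ((P^2)⁻¹ * Real.sqrt P) := by ring
  -- tail bound (finite)
  have tail : ∀ m : ℕ, N ≤ m →
      ∑ j ∈ Finset.Ico N m, f j ≤ (Real.sqrt P)⁻¹ * P⁻¹ := by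
    intro m hm
    have step : ∀ j ∈ Finset.Ico N m,
        f j ≤ (Real.sqrt P)⁻¹ * ((P + (j:ℝ) - 1)⁻¹ - (P + (j:ℝ))⁻¹) := by
      intro j hj
      have hjN : N ≤ j := (Finset.mem_Ico.mp hj).1
      have hjP : P ≤ (j:ℝ) := le_trans hNP (by exact_mod_cast hjN)
      have hsx : Real.sqrt P ≤ Real.sqrt j := Real.sqrt_le_sqrt hjP
      have hsP : (0:ℝ) < Real.sqrt P := Real.sqrt_pos.mpr hP0
      have hx1 : (0:ℝ) < P + (j:ℝ) - 1 := by linarith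
      have hx : (0:ℝ) < P + (j:ℝ) := by linarith
      have h2 : (1 + Real.sqrt j)⁻¹ ≤ (Real.sqrt P)⁻¹ := by
        apply inv_anti₀ hsP; linarith
      have h1 : (1 + (P + (j:ℝ))^2)⁻¹ ≤ (P + (j:ℝ) - 1)⁻¹ - (P + (j:ℝ))⁻¹ := by
        have heq : (P + (j:ℝ) - 1)⁻¹ - (P + (j:ℝ))⁻¹
            = ((P + (j:ℝ) - 1) * (P + (j:ℝ)))⁻¹ := by
          field_simp; ring
        rw [heq]
        apply inv_anti₀ (by positivity)
        nlinarith
      have hnn : (0:ℝ) ≤ (P + (j:ℝ) - 1)⁻¹ - (P + (j:ℝ))⁻¹ := by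
        have := inv_anti₀ hx1 (by linarith : P + (j:ℝ) - 1 ≤ P + (j:ℝ))
        linarith
      calc f j ≤ ((P + (j:ℝ) - 1)⁻¹ - (P + (j:ℝ))⁻¹) * (Real.sqrt P)⁻¹ := by
            apply mul_le_mul h1 h2 (by positivity) hnn
        _ = (Real.sqrt P)⁻¹ * ((P + (j:ℝ) - 1)⁻¹ - (P + (j:ℝ))⁻¹) := by ring
    calc ∑ j ∈ Finset.Ico N m, f j
        ≤ ∑ j ∈ Finset.Ico N m, (Real.sqrt P)⁻¹ * ((P + (j:ℝ) - 1)⁻¹ - (P + (j:ℝ))⁻¹) :=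
          Finset.sum_le_sum step
      _ = (Real.sqrt P)⁻¹ * ∑ j ∈ Finset.Ico N m, ((P + (j:ℝ) - 1)⁻¹ - (P + (j:ℝ))⁻¹) := by
          rw [Finset.mul_sum]
      _ ≤ (Real.sqrt P)⁻¹ * P⁻¹ := by
          apply mul_le_mul_of_nonneg_left _ (by positivity)
          have htel : ∑ j ∈ Finset.Ico N m, ((P + (j:ℝ) - 1)⁻¹ - (P + (j:ℝ))⁻¹)
              = (P + (N:ℝ) - 1)⁻¹ - (P + ((m - N : ℕ):ℝ) + (N:ℝ) - 1)⁻¹ := by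
            rw [Finset.sum_Ico_eq_sum_range]
            have : ∀ k : ℕ, (P + ((N + k : ℕ):ℝ) - 1)⁻¹ - (P + ((N + k : ℕ):ℝ))⁻¹
                = (fun i : ℕ => (P + (i:ℝ) + (N:ℝ) - 1)⁻¹) k
                  - (fun i : ℕ => (P + (i:ℝ) + (N:ℝ) - 1)⁻¹) (k+1) := by
              intro k; push_cast; ring_nf
            rw [Finset.sum_congr rfl (fun k _ => this k), Finset.sum_range_sub']
            push_cast; ring_nf
          rw [htel]
          have hxm : (0:ℝ) < P + ((m - N : ℕ):ℝ) + (N:ℝ) - 1 := by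
            have : (1:ℝ) ≤ (N:ℝ) := by exact_mod_cast hN1
            have := Nat.cast_nonneg (α := ℝ) (m - N)
            linarith
          have h1 : (P + (N:ℝ) - 1)⁻¹ ≤ P⁻¹ := by
            apply inv_anti₀ hP0
            have : (1:ℝ) ≤ (N:ℝ) := by exact_mod_cast hN1
            linarith
          have h2 : (0:ℝ) ≤ (P + ((m - N : ℕ):ℝ) + (N:ℝ) - 1)⁻¹ := by positivity
          linarith
  -- power identities
  have hsqP : Real.sqrt P = P ^ ((1:ℝ)/2) := Real.sqrt_eq_rpow P
  have hpow1 : (P^2)⁻¹ * Real.sqrt P = P ^ (-(3:ℝ)/2) := by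
    rw [hsqP, show ((P:ℝ)^2)⁻¹ = P ^ (-2:ℝ) by
      rw [Real.rpow_neg hP0.le]; norm_num [Real.rpow_two],
      ← Real.rpow_add hP0]
    norm_num
  have hpow2 : (Real.sqrt P)⁻¹ * P⁻¹ = P ^ (-(3:ℝ)/2) := by
    rw [hsqP, ← Real.rpow_neg_one P, ← Real.rpow_neg hP0.le, ← Real.rpow_add hP0]
    norm_num
  -- conclude via tsum_le_of_sum_le
  apply Summable.tsum_le_of_sum_le hsumf
  intro s
  set m : ℕ := max N (s.sup id + 1) with hm
  have hsub : s ⊆ Finset.range m := by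
    intro i hi
    rw [Finset.mem_range, hm]
    have : i ≤ s.sup id := Finset.le_sup (f := id) hi
    omega
  have hNm : N ≤ m := le_max_left _ _
  have hsplit : ∑ j ∈ Finset.range m, f j
      = ∑ j ∈ Finset.range N, f j + ∑ j ∈ Finset.Ico N m, f j := by
    rw [Finset.range_eq_Ico, Finset.range_eq_Ico]
    exact (Finset.sum_Ico_consecutive f (Nat.zero_le N) hNm).symm
  have hsqrt2 : Real.sqrt 2 ≤ (3:ℝ)/2 := by
    nlinarith [Real.sq_sqrt (show (0:ℝ) ≤ 2 by norm_num), Real.sqrt_nonneg 2]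
  have hrp : (0:ℝ) ≤ P ^ (-(3:ℝ)/2) := Real.rpow_nonneg hP0.le _
  calc ∑ j ∈ s, f j ≤ ∑ j ∈ Finset.range m, f j :=
        Finset.sum_le_sum_of_subset_of_nonneg hsub (fun i _ _ => hf_nonneg i)
    _ = ∑ j ∈ Finset.range N, f j + ∑ j ∈ Finset.Ico N m, f j := hsplit
    _ ≤ 2 * Real.sqrt 2 * ((P^2)⁻¹ * Real.sqrt P) + (Real.sqrt P)⁻¹ * P⁻¹ := by
        have := tail m hNm
        linarith
    _ = 2 * Real.sqrt 2 * P ^ (-(3:ℝ)/2) + P ^ (-(3:ℝ)/2) := by rw [hpow1, hpow2]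
    _ ≤ 4 * P ^ (-(3:ℝ)/2) := by nlinarith
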